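/- Let b > 1 and n ≥ 1, and define D(r) = log( (r + (n−r)·b)/n ) − ((n−r)/n)·log b for real r ∈ [0, n]. Then D attains its maximum over [0, n] at the unique point r* = n·( b/(b−1) − 1/log b ), which lies in (0, n), and the maximum value is D(r*) = H − 1 − log H, where H = (log b)/(b−1) ∈ (0,1). -/

import Mathlib

/-- The continuous relaxation D(r) = log((r+(n-r)b)/n) - ((n-r)/n) log b attains its
maximum over [0,n] uniquely at r* = n(b/(b-1) - 1/log b) ∈ (0,n), with maximum value
H - 1 - log H where H = log b/(b-1) ∈ (0,1). -/
theorem stmt_13 (b : ℝ) (hb : 1 < b) (n : ℕ) (hn : 1 ≤ n) :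
    let D : ℝ → ℝ := fun r =>
      Real.log ((r + ((n : ℝ) - r) * b) / n) - (((n : ℝ) - r) / n) * Real.log b
    let rstar : ℝ := (n : ℝ) * (b / (b - 1) - 1 / Real.log b)
    let H : ℝ := Real.log b / (b - 1)
    rstar ∈ Set.Ioo (0 : ℝ) n ∧
    (∀ r ∈ Set.Icc (0 : ℝ) n, D r ≤ D rstar) ∧
    (∀ r ∈ Set.Icc (0 : ℝ) n, D r = D rstar → r = rstar) ∧
    (0 < H ∧ H < 1) ∧
    D rstar = H - 1 - Real.log H := by
  intro D rstar H
  have hn' : (0:ℝ) < n := by exact_mod_cast hn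
  have hb0 : (0:ℝ) < b := by linarith
  have hb1 : (0:ℝ) < b - 1 := by linarith
  have hlb : 0 < Real.log b := Real.log_pos hb
  have hlt : Real.log b < b - 1 :=
    Real.log_lt_sub_one_of_pos hb0 (by linarith)
  have hblb : b - 1 < b * Real.log b := by
    have h2 : Real.log b⁻¹ < b⁻¹ - 1 :=
      Real.log_lt_sub_one_of_pos (by positivity) (by
        intro h
        have : b = 1 := by
          field_simp at h; linarith
        linarith)
    rw [Real.log_inv] at h2
    have hbne : b ≠ 0 := ne_of_gt hb0
    have : b * Real.log b > b * (1 - b⁻¹) := by nlinarith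
    have hbi : b * (1 - b⁻¹) = b - 1 := by field_simp
    linarith [hbi ▸ this]
  have hD : ∀ r : ℝ, D r =
      Real.log ((r + ((n : ℝ) - r) * b) / n) - (((n : ℝ) - r) / n) * Real.log b := fun r => rfl
  have hr : rstar = (n : ℝ) * (b / (b - 1) - 1 / Real.log b) := rfl
  have hH : H = Real.log b / (b - 1) := rfl
  have hlbne : Real.log b ≠ 0 := ne_of_gt hlb
  have hb1ne : b - 1 ≠ 0 := ne_of_gt hb1
  have hnne : (n:ℝ) ≠ 0 := ne_of_gt hn'
  -- rstar ∈ Ioo 0 n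
  have h1lt : 1 / Real.log b < b / (b - 1) := by
    rw [div_lt_div_iff₀ hlb hb1]; nlinarith
  have hrpos : 0 < rstar := by
    rw [hr]; exact mul_pos hn' (by linarith)
  have hfrac_lt : b / (b - 1) - 1 / Real.log b < 1 := by
    have hbb : b / (b - 1) = 1 + 1 / (b - 1) := by field_simp; ring
    have : 1 / (b - 1) < 1 / Real.log b := one_div_lt_one_div_of_lt hlb hlt
    linarith
  have hrlt : rstar < n := by
    rw [hr]
    calc (n:ℝ) * (b / (b - 1) - 1 / Real.log b) < (n:ℝ) * 1 := by
          exact mul_lt_mul_of_pos_left hfrac_lt hn'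
      _ = n := mul_one _
  -- value of A at rstar
  have hastar : (0:ℝ) < (b - 1) / Real.log b := by positivity
  have hArs : (rstar + ((n : ℝ) - rstar) * b) / n = (b - 1) / Real.log b := by
    rw [hr]; field_simp; ring
  -- maximality
  have hApos : ∀ r ∈ Set.Icc (0:ℝ) n, 0 < (r + ((n : ℝ) - r) * b) / n := by
    rintro r ⟨h0, h1⟩
    have h2 : (n:ℝ) ≤ r + ((n:ℝ) - r) * b := by nlinarith
    exact div_pos (lt_of_lt_of_le hn' h2) hn'
  have hid : ∀ r : ℝ,
      ((r + ((n : ℝ) - r) * b) / n) / ((b - 1) / Real.log b) - 1 =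
        (((n : ℝ) - r) / n) * Real.log b - (((n : ℝ) - rstar) / n) * Real.log b := by
    intro r
    rw [hr]; field_simp; ring
  have hmax : ∀ r ∈ Set.Icc (0:ℝ) n, D r ≤ D rstar := by
    intro r hrmem
    have hA := hApos r hrmem
    have hx : 0 < ((r + ((n : ℝ) - r) * b) / n) / ((b - 1) / Real.log b) := by positivity
    have hlog := Real.log_le_sub_one_of_pos hx
    rw [Real.log_div (ne_of_gt hA) (ne_of_gt hastar)] at hlog
    rw [hD r, hD rstar, hArs]
    have := hid r
    linarith
  refine ⟨⟨hrpos, hrlt⟩, hmax, ?_, ?_, ?_⟩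
  · -- uniqueness
    intro r hrmem heq
    by_contra hne
    have hA := hApos r hrmem
    have hAne : (r + ((n : ℝ) - r) * b) / n ≠ (b - 1) / Real.log b := by
      intro h
      apply hne
      rw [← hArs] at h
      have : r * (b - 1) = rstar * (b - 1) := by
        field_simp at h; nlinarith [h]
      have := mul_right_cancel₀ hb1ne this
      exact this
    have hxne : ((r + ((n : ℝ) - r) * b) / n) / ((b - 1) / Real.log b) ≠ 1 := by
      exact fun h => hAne ((div_eq_one_iff_eq (ne_of_gt hastar)).mp h)
    have hx : 0 < ((r + ((n : ℝ) - r) * b) / n) / ((b - 1) / Real.log b) := by positivity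
    have hlog := Real.log_lt_sub_one_of_pos hx hxne
    rw [Real.log_div (ne_of_gt hA) (ne_of_gt hastar)] at hlog
    have h1 := hid r
    rw [hD r, hD rstar, hArs] at heq
    linarith
  · exact ⟨by rw [hH]; positivity, by rw [hH, div_lt_one hb1]; exact hlt⟩
  · -- value at rstar
    have hinv : (b - 1) / Real.log b = H⁻¹ := by rw [hH, inv_div]
    have h2 : (((n : ℝ) - rstar) / n) * Real.log b = 1 - H := by
      rw [hr, hH]; field_simp; ring
    rw [hD rstar, hArs, hinv, Real.log_inv, h2]
    ring
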